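/- Let a and b be two distinct circles of a finite Möbius plane of order q. Then the number of vertices v of the point-circle incidence graph (points or circles) satisfying d(v,a) ≠ d(v,b) is at least q^3/2 - 3q^2 + 11q/2 - 1. -/

import Mathlib

open Finset

/-- A Möbius plane on a point type `P`: circles are finite point sets
satisfying the four Möbius plane axioms. -/
structure MobiusPlane (P : Type*) [DecidableEq P] where
  circles : Finset (Finset P)
  ax1 : ∀ A B C : P, A ≠ B → A ≠ C → B ≠ C →
    ∃! z, z ∈ circles ∧ A ∈ z ∧ B ∈ z ∧ C ∈ z
  ax2 : ∀ z ∈ circles, ∀ p ∈ z, ∀ q : P, q ∉ z →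
    ∃! z', z' ∈ circles ∧ p ∈ z' ∧ q ∈ z' ∧ z ∩ z' = {p}
  ax3 : circles.Nonempty ∧ ∀ z ∈ circles, 3 ≤ z.card
  ax4 : ∀ z ∈ circles, ∃ x : P, x ∉ z

/-- A finite Möbius plane has order `q` if every circle has exactly `q + 1` points. -/
def MobiusPlane.HasOrder {P : Type*} [DecidableEq P] (M : MobiusPlane P) (q : ℕ) : Prop :=
  ∀ z ∈ M.circles, z.card = q + 1

/-- The point–circle incidence graph of a Möbius plane: vertices are the points
and the circles, a point is adjacent to a circle iff it lies on it. -/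
def MobiusPlane.incGraph {P : Type*} [DecidableEq P] (M : MobiusPlane P) :
    SimpleGraph (P ⊕ {z // z ∈ M.circles}) where
  Adj v w :=
    (∃ p z, v = Sum.inl p ∧ w = Sum.inr z ∧ p ∈ z.1) ∨
    (∃ p z, v = Sum.inr z ∧ w = Sum.inl p ∧ p ∈ z.1)
  symm := by
    constructor
    intro v w h
    rcases h with ⟨p, z, h1, h2, h3⟩ | ⟨p, z, h1, h2, h3⟩
    · exact Or.inr ⟨p, z, h2, h1, h3⟩
    · exact Or.inl ⟨p, z, h2, h1, h3⟩
  loopless := by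
    constructor
    intro v h
    rcases h with ⟨p, z, h1, h2, _⟩ | ⟨p, z, h1, h2, _⟩ <;> subst h1 <;> simp_all
namespace MobiusPlane

variable {P : Type*} [DecidableEq P] (M : MobiusPlane P)

/-- Two distinct circles meet in at most 2 points. -/
lemma inter_card_le_two {c d : Finset P} (hc : c ∈ M.circles) (hd : d ∈ M.circles)
    (hne : c ≠ d) : (c ∩ d).card ≤ 2 := by
  by_contra hcard
  push_neg at hcard
  obtain ⟨A, hA⟩ : (c ∩ d).Nonempty := Finset.card_pos.mp (by omega)
  have h2 : 1 < ((c ∩ d).erase A).card := by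
    have := Finset.card_erase_of_mem hA; omega
  obtain ⟨B, hB, C, hC, hBC⟩ := Finset.one_lt_card.mp h2
  have hAB : A ≠ B := (Finset.ne_of_mem_erase hB).symm
  have hAC : A ≠ C := (Finset.ne_of_mem_erase hC).symm
  have hB' := Finset.mem_of_mem_erase hB
  have hC' := Finset.mem_of_mem_erase hC
  obtain ⟨z, -, huniq⟩ := M.ax1 A B C hAB hAC hBC
  have h1 : c = z := (huniq c ⟨hc, (Finset.mem_inter.mp hA).1,
    (Finset.mem_inter.mp hB').1, (Finset.mem_inter.mp hC').1⟩)
  have h2' : d = z := (huniq d ⟨hd, (Finset.mem_inter.mp hA).2,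
    (Finset.mem_inter.mp hB').2, (Finset.mem_inter.mp hC').2⟩)
  exact hne (h1.trans h2'.symm)

/-- Every point lies on some circle. -/
lemma exists_circle_mem (A : P) : ∃ z ∈ M.circles, A ∈ z := by
  obtain ⟨z₀, hz₀⟩ := M.ax3.1
  by_cases hA : A ∈ z₀
  · exact ⟨z₀, hz₀, hA⟩
  · have h3 : 3 ≤ z₀.card := M.ax3.2 z₀ hz₀
    obtain ⟨B, hB, C, hC, hBC⟩ := Finset.one_lt_card.mp (by omega : 1 < z₀.card)
    have hAB : A ≠ B := fun h => hA (h ▸ hB)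
    have hAC : A ≠ C := fun h => hA (h ▸ hC)
    obtain ⟨z, ⟨hz, hAz, -, -⟩, -⟩ := M.ax1 A B C hAB hAC hBC
    exact ⟨z, hz, hAz⟩

/-- Any two distinct points lie on a common circle. -/
lemma exists_circle_pair {A B : P} (hAB : A ≠ B) : ∃ z ∈ M.circles, A ∈ z ∧ B ∈ z := by
  obtain ⟨z, hz, hAz⟩ := M.exists_circle_mem A
  by_cases hB : B ∈ z
  · exact ⟨z, hz, hAz, hB⟩
  · obtain ⟨z', ⟨hz', hAz', hBz', -⟩, -⟩ := M.ax2 z hz A hAz B hB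
    exact ⟨z', hz', hAz', hBz'⟩

/-- For distinct points `A ≠ B` there is a circle through `A` avoiding `B`. -/
lemma exists_circle_sep {A B : P} (hAB : A ≠ B) : ∃ z ∈ M.circles, A ∈ z ∧ B ∉ z := by
  obtain ⟨z₀, hz₀, hAz₀, hBz₀⟩ := M.exists_circle_pair hAB
  obtain ⟨Q, hQ⟩ := M.ax4 z₀ hz₀
  have h3 : 3 ≤ z₀.card := M.ax3.2 z₀ hz₀
  have : (z₀ \ {A, B}).Nonempty := by
    apply Finset.card_pos.mp
    have h2 : ({A, B} : Finset P).card ≤ 2 := Finset.card_insert_le _ _ |>.trans (by simp)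
    have := Finset.le_card_sdiff ({A, B} : Finset P) z₀
    omega
  obtain ⟨C, hC⟩ := this
  have hCz₀ : C ∈ z₀ := (Finset.mem_sdiff.mp hC).1
  have hCAB : C ∉ ({A, B} : Finset P) := (Finset.mem_sdiff.mp hC).2
  have hCA : C ≠ A := fun h => hCAB (by simp [h])
  have hCB : C ≠ B := fun h => hCAB (by simp [h])
  have hQA : A ≠ Q := fun h => hQ (h ▸ hAz₀)
  have hQC : C ≠ Q := fun h => hQ (h ▸ hCz₀)
  obtain ⟨w, ⟨hw, hAw, hCw, hQw⟩, -⟩ := M.ax1 A C Q (Ne.symm hCA) hQA hQC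
  refine ⟨w, hw, hAw, fun hBw => ?_⟩
  obtain ⟨z, -, huniq⟩ := M.ax1 A B C hAB (Ne.symm hCA) (Ne.symm hCB)
  have h1 : w = z := huniq w ⟨hw, hAw, hBw, hCw⟩
  have h2 : z₀ = z := huniq z₀ ⟨hz₀, hAz₀, hBz₀, hCz₀⟩
  exact hQ ((h2 ▸ h1 : w = z₀) ▸ hQw)

end MobiusPlane
namespace MobiusPlane

variable {P : Type*} [DecidableEq P] (M : MobiusPlane P)

/-- Through any two distinct points there are exactly `q+1` circles. -/
lemma pair_count {q : ℕ} (hq : M.HasOrder q) {A B : P} (hAB : A ≠ B) :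
    (M.circles.filter fun c => A ∈ c ∧ B ∈ c).card = q + 1 := by
  classical
  obtain ⟨z, hz, hAz, hBz⟩ := M.exists_circle_sep hAB
  rw [← hq z hz]
  apply Finset.card_bij (fun c _ => if hcz : ((c ∩ z).erase A).Nonempty then hcz.choose else A)
  · -- maps into z
    intro c hc
    split
    · next hcz =>
      have := hcz.choose_spec
      exact (Finset.mem_inter.mp (Finset.mem_of_mem_erase this)).2
    · exact hAz
  · -- injective
    intro c₁ hc₁ c₂ hc₂ heq
    obtain ⟨hc₁', hAc₁, hBc₁⟩ := Finset.mem_filter.mp hc₁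
    obtain ⟨hc₂', hAc₂, hBc₂⟩ := Finset.mem_filter.mp hc₂
    have key : ∀ c, c ∈ M.circles → A ∈ c → B ∈ c →
        ∀ h : ¬((c ∩ z).erase A).Nonempty, z ∩ c = {A} := by
      intro c hc' hAc hBc hne
      rw [Finset.not_nonempty_iff_eq_empty, Finset.erase_eq_empty_iff] at hne
      rcases hne with h0 | h1
      · exact absurd (Finset.mem_inter.mpr ⟨hAc, hAz⟩) (h0 ▸ Finset.notMem_empty A)
      · rw [Finset.inter_comm]; exact h1
    split at heq <;> split at heq
    · next h₁ h₂ =>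
      -- both secant, same second point
      have hx₁ := h₁.choose_spec
      have hx₂ := h₂.choose_spec
      set x := h₁.choose with hxdef
      have hxz : x ∈ z := (Finset.mem_inter.mp (Finset.mem_of_mem_erase hx₁)).2
      have hxc₁ : x ∈ c₁ := (Finset.mem_inter.mp (Finset.mem_of_mem_erase hx₁)).1
      have hxc₂ : x ∈ c₂ := by
        rw [show x = Exists.choose h₂ from heq]
        exact (Finset.mem_inter.mp (Finset.mem_of_mem_erase hx₂)).1
      have hxA : A ≠ x := (Finset.ne_of_mem_erase hx₁).symm
      have hxB : B ≠ x := fun h => hBz (h ▸ hxz)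
      obtain ⟨w, -, huniq⟩ := M.ax1 A B x hAB hxA hxB
      exact (huniq c₁ ⟨hc₁', hAc₁, hBc₁, hxc₁⟩).trans (huniq c₂ ⟨hc₂', hAc₂, hBc₂, hxc₂⟩).symm
    · next h₁ _ =>
      exact absurd heq (Finset.ne_of_mem_erase h₁.choose_spec)
    · next _ h₂ =>
      exact absurd heq.symm (Finset.ne_of_mem_erase h₂.choose_spec)
    · next h₁ h₂ =>
      obtain ⟨w, -, huniq⟩ := M.ax2 z hz A hAz B hBz
      exact (huniq c₁ ⟨hc₁', hAc₁, hBc₁, key c₁ hc₁' hAc₁ hBc₁ h₁⟩).trans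
        (huniq c₂ ⟨hc₂', hAc₂, hBc₂, key c₂ hc₂' hAc₂ hBc₂ h₂⟩).symm
  · -- surjective
    intro x hx
    by_cases hxA : x = A
    · obtain ⟨w, ⟨hw, hAw, hBw, hzw⟩, -⟩ := M.ax2 z hz A hAz B hBz
      refine ⟨w, Finset.mem_filter.mpr ⟨hw, hAw, hBw⟩, ?_⟩
      have hempty : ((w ∩ z).erase A) = ∅ := by
        rw [Finset.inter_comm] at hzw
        rw [hzw]
        simp
      rw [dif_neg (by simp [hempty])]
      exact hxA.symm
    · have hxB : B ≠ x := fun h => hBz (h ▸ hx)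
      obtain ⟨w, ⟨hw, hAw, hBw, hxw⟩, -⟩ := M.ax1 A B x hAB (Ne.symm hxA) hxB
      refine ⟨w, Finset.mem_filter.mpr ⟨hw, hAw, hBw⟩, ?_⟩
      have hwz : w ≠ z := fun h => hBz (h ▸ hBw)
      have hsub : ({A, x} : Finset P) ⊆ w ∩ z := by
        intro y hy
        rcases Finset.mem_insert.mp hy with h | h
        · exact h ▸ Finset.mem_inter.mpr ⟨hAw, hAz⟩
        · exact (Finset.mem_singleton.mp h) ▸ Finset.mem_inter.mpr ⟨hxw, hx⟩
      have hcard2 : ({A, x} : Finset P).card = 2 := by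
        rw [Finset.card_insert_of_notMem (by simp [Ne.symm hxA]), Finset.card_singleton]
      have heq2 : w ∩ z = {A, x} :=
        (Finset.eq_of_subset_of_card_le hsub
          (by rw [hcard2]; exact M.inter_card_le_two hw hz hwz)).symm
      have herase : (w ∩ z).erase A = {x} := by
        rw [heq2]
        exact Finset.erase_insert (by simp only [Finset.mem_singleton]; exact fun h => hxA h.symm)
      have hpos : ((w ∩ z).erase A).Nonempty := by
        rw [herase]; exact ⟨x, Finset.mem_singleton_self x⟩
      rw [dif_pos hpos]
      exact Finset.mem_singleton.mp (herase ▸ hpos.choose_spec)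

end MobiusPlane
open Finset in
lemma card_filter_product_left {α β : Type*} [DecidableEq α] [DecidableEq β]
    (s : Finset α) (t : Finset β) (p : α → β → Prop) [∀ a b, Decidable (p a b)] :
    ((s ×ˢ t).filter fun x => p x.1 x.2).card = ∑ a ∈ s, (t.filter fun b => p a b).card := by
  rw [Finset.card_eq_sum_card_fiberwise
    (fun x hx => (Finset.mem_product.mp (Finset.mem_filter.mp hx).1).1)]
  refine Finset.sum_congr rfl fun a ha => ?_
  apply Finset.card_bij (fun x _ => x.2)
  · intro x hx
    obtain ⟨hx1, hx2⟩ := Finset.mem_filter.mp hx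
    obtain ⟨hx3, hx4⟩ := Finset.mem_filter.mp hx1
    exact Finset.mem_filter.mpr ⟨(Finset.mem_product.mp hx3).2, hx2 ▸ hx4⟩
  · intro x hx y hy hxy
    obtain ⟨-, hx2⟩ := Finset.mem_filter.mp hx
    obtain ⟨-, hy2⟩ := Finset.mem_filter.mp hy
    exact Prod.ext (hx2.trans hy2.symm) hxy
  · intro b hb
    obtain ⟨hb1, hb2⟩ := Finset.mem_filter.mp hb
    exact ⟨(a, b), Finset.mem_filter.mpr ⟨Finset.mem_filter.mpr
      ⟨Finset.mem_product.mpr ⟨ha, hb1⟩, hb2⟩, rfl⟩, rfl⟩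

open Finset in
lemma card_filter_product_right {α β : Type*} [DecidableEq α] [DecidableEq β]
    (s : Finset α) (t : Finset β) (p : α → β → Prop) [∀ a b, Decidable (p a b)] :
    ((s ×ˢ t).filter fun x => p x.1 x.2).card = ∑ b ∈ t, (s.filter fun a => p a b).card := by
  have hmem : ∀ x ∈ (s ×ˢ t).filter (fun x => p x.1 x.2), x.2 ∈ t :=
    fun x hx => (Finset.mem_product.mp (Finset.mem_filter.mp hx).1).2
  rw [Finset.card_eq_sum_card_fiberwise hmem]
  refine Finset.sum_congr rfl fun b hb => ?_
  apply Finset.card_bij (fun x _ => x.1)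
  · intro x hx
    obtain ⟨hx1, hx2⟩ := Finset.mem_filter.mp hx
    obtain ⟨hx3, hx4⟩ := Finset.mem_filter.mp hx1
    exact Finset.mem_filter.mpr ⟨(Finset.mem_product.mp hx3).1, hx2 ▸ hx4⟩
  · intro x hx y hy hxy
    obtain ⟨-, hx2⟩ := Finset.mem_filter.mp hx
    obtain ⟨-, hy2⟩ := Finset.mem_filter.mp hy
    exact Prod.ext hxy (hx2.trans hy2.symm)
  · intro a ha
    obtain ⟨ha1, ha2⟩ := Finset.mem_filter.mp ha
    exact ⟨(a, b), Finset.mem_filter.mpr ⟨Finset.mem_filter.mpr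
      ⟨Finset.mem_product.mpr ⟨ha1, hb⟩, ha2⟩, rfl⟩, rfl⟩

namespace MobiusPlane

variable {P : Type*} [DecidableEq P] (M : MobiusPlane P)

lemma two_le_q {q : ℕ} (hq : M.HasOrder q) : 2 ≤ q := by
  obtain ⟨z₀, hz₀⟩ := M.ax3.1
  have := M.ax3.2 z₀ hz₀
  have := hq z₀ hz₀
  omega

lemma npoints [Fintype P] {q : ℕ} (hq : M.HasOrder q) : Fintype.card P = q ^ 2 + 1 := by
  classical
  obtain ⟨z₀, hz₀⟩ := M.ax3.1
  have h3 := M.ax3.2 z₀ hz₀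
  obtain ⟨A, hA, B, hB, hAB⟩ := Finset.one_lt_card.mp (by omega : 1 < z₀.card)
  set t := M.circles.filter (fun c => A ∈ c ∧ B ∈ c) with ht
  set s : Finset P := Finset.univ \ {A, B} with hs
  set f : P → Finset P := fun C =>
    if h : A ≠ C ∧ B ≠ C then (M.ax1 A B C hAB h.1 h.2).choose else ∅ with hf
  have hmem : ∀ C ∈ s, f C ∈ t := by
    intro C hC
    have hCAB : C ∉ ({A, B} : Finset P) := (Finset.mem_sdiff.mp hC).2
    have h : A ≠ C ∧ B ≠ C := ⟨fun h => hCAB (by simp [h.symm]), fun h => hCAB (by simp [h.symm])⟩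
    obtain ⟨hc, hAc, hBc, -⟩ := (M.ax1 A B C hAB h.1 h.2).choose_spec.1
    rw [hf]; simp only [dif_pos h]
    exact Finset.mem_filter.mpr ⟨hc, hAc, hBc⟩
  have hcount := Finset.card_eq_sum_card_fiberwise hmem
  have hfiber : ∀ c ∈ t, (s.filter fun C => f C = c) = c \ {A, B} := by
    intro c hc
    obtain ⟨hc', hAc, hBc⟩ := Finset.mem_filter.mp hc
    ext C
    simp only [Finset.mem_filter, Finset.mem_sdiff, Finset.mem_univ, true_and, hs]
    constructor
    · rintro ⟨hCAB, hfC⟩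
      have h : A ≠ C ∧ B ≠ C :=
        ⟨fun h => hCAB (by simp [h.symm]), fun h => hCAB (by simp [h.symm])⟩
      rw [hf] at hfC; simp only [dif_pos h] at hfC
      obtain ⟨-, -, -, hCc⟩ := (M.ax1 A B C hAB h.1 h.2).choose_spec.1
      exact ⟨hfC ▸ hCc, hCAB⟩
    · rintro ⟨hCc, hCAB⟩
      have h : A ≠ C ∧ B ≠ C :=
        ⟨fun h => hCAB (by simp [h.symm]), fun h => hCAB (by simp [h.symm])⟩
      refine ⟨hCAB, ?_⟩
      rw [hf]; simp only [dif_pos h]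
      exact ((M.ax1 A B C hAB h.1 h.2).choose_spec.2 c ⟨hc', hAc, hBc, hCc⟩).symm
  have hsum : ∀ c ∈ t, (s.filter fun C => f C = c).card = q - 1 := by
    intro c hc
    rw [hfiber c hc]
    obtain ⟨hc', hAc, hBc⟩ := Finset.mem_filter.mp hc
    have hsub : ({A, B} : Finset P) ⊆ c := by
      intro y hy
      rcases Finset.mem_insert.mp hy with h | h
      · exact h ▸ hAc
      · exact (Finset.mem_singleton.mp h) ▸ hBc
    rw [Finset.card_sdiff_of_subset hsub, hq c hc']
    have : ({A, B} : Finset P).card = 2 := by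
      rw [Finset.card_insert_of_notMem (by simp [hAB]), Finset.card_singleton]
    omega
  rw [Finset.sum_congr rfl hsum, Finset.sum_const, ht, M.pair_count hq hAB] at hcount
  have hscard : s.card = Fintype.card P - 2 := by
    rw [hs, Finset.card_sdiff_of_subset (Finset.subset_univ _), Finset.card_univ]
    congr 1
    rw [Finset.card_insert_of_notMem (by simp [hAB]), Finset.card_singleton]
  have hP2 : 2 ≤ Fintype.card P := by
    have : ({A, B} : Finset P).card ≤ Fintype.card P := by
      rw [← Finset.card_univ]; exact Finset.card_le_card (Finset.subset_univ _)
    rw [Finset.card_insert_of_notMem (by simp [hAB]), Finset.card_singleton] at this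
    omega
  have hq2 := M.two_le_q hq
  rw [hscard, smul_eq_mul] at hcount
  obtain ⟨m, rfl⟩ : ∃ m, q = m + 2 := ⟨q - 2, by omega⟩
  have : (m + 2 + 1) * (m + 2 - 1) = m * m + 4 * m + 3 := by
    have : m + 2 - 1 = m + 1 := by omega
    rw [this]; ring
  rw [this] at hcount
  have : (m + 2) ^ 2 + 1 = m * m + 4 * m + 5 := by ring
  omega

lemma point_count [Fintype P] {q : ℕ} (hq : M.HasOrder q) (A : P) :
    (M.circles.filter fun c => A ∈ c).card = q ^ 2 + q := by
  classical
  have hq2 := M.two_le_q hq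
  set W := ((Finset.univ.erase A) ×ˢ M.circles).filter
    (fun x : P × Finset P => A ∈ x.2 ∧ x.1 ∈ x.2) with hW
  have h1 : W.card = q ^ 2 * (q + 1) := by
    rw [hW]
    refine (card_filter_product_left (Finset.univ.erase A) M.circles
      (fun B c => A ∈ c ∧ B ∈ c)).trans ?_
    refine (Finset.sum_congr rfl (fun B hB => M.pair_count hq
      (Ne.symm (Finset.ne_of_mem_erase hB)))).trans ?_
    rw [Finset.sum_const, Finset.card_erase_of_mem (Finset.mem_univ A), Finset.card_univ,
      M.npoints hq, smul_eq_mul]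
    simp
  have h2 : W.card = (M.circles.filter fun c => A ∈ c).card * q := by
    rw [hW]
    refine (card_filter_product_right (Finset.univ.erase A) M.circles
      (fun B c => A ∈ c ∧ B ∈ c)).trans ?_
    refine (Finset.sum_congr rfl (fun c hc => (?_ : _ = if A ∈ c then q else 0))).trans ?_
    · by_cases hAc : A ∈ c
      · rw [if_pos hAc]
        have he : (Finset.univ.erase A).filter (fun B => A ∈ c ∧ B ∈ c) = c.erase A := by
          ext B
          simp only [Finset.mem_filter, Finset.mem_erase, Finset.mem_univ, true_and]
          tauto
        rw [he, Finset.card_erase_of_mem hAc, hq c hc]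
        omega
      · rw [if_neg hAc, Finset.card_eq_zero]
        ext B
        simp only [Finset.mem_filter, Finset.notMem_empty, iff_false]
        tauto
    · rw [← Finset.sum_filter, Finset.sum_const, smul_eq_mul]
  have hqpos : 0 < q := by omega
  have := h1.symm.trans h2
  have hx : (M.circles.filter fun c => A ∈ c).card * q = (q ^ 2 + q) * q := by
    rw [← this]; ring
  exact Nat.eq_of_mul_eq_mul_right hqpos hx
end MobiusPlane
namespace MobiusPlane

variable {P : Type*} [DecidableEq P] (M : MobiusPlane P)

lemma tangent_le {q : ℕ} (hq : M.HasOrder q) {b : Finset P} (hb : b ∈ M.circles)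
    {A : P} (hA : A ∉ b) :
    (M.circles.filter fun c => A ∈ c ∧ (c ∩ b).card = 1).card ≤ q + 1 := by
  classical
  rw [← hq b hb]
  apply Finset.card_le_card_of_injOn
    (fun c => if h : (c ∩ b).Nonempty then h.choose else A)
  · intro c hc
    obtain ⟨-, -, h1⟩ := Finset.mem_filter.mp hc
    have hne : (c ∩ b).Nonempty := Finset.card_pos.mp (by omega)
    beta_reduce
    rw [dif_pos hne]
    exact (Finset.mem_inter.mp hne.choose_spec).2
  · intro c₁ hc₁ c₂ hc₂ heq
    simp only [Finset.coe_filter, Set.mem_setOf_eq] at hc₁ hc₂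
    obtain ⟨hc₁', hAc₁, h1⟩ := hc₁
    obtain ⟨hc₂', hAc₂, h2⟩ := hc₂
    have hne₁ : (c₁ ∩ b).Nonempty := Finset.card_pos.mp (by omega)
    have hne₂ : (c₂ ∩ b).Nonempty := Finset.card_pos.mp (by omega)
    beta_reduce at heq
    rw [dif_pos hne₁, dif_pos hne₂] at heq
    set x := hne₁.choose with hx
    have hx₁ : x ∈ c₁ ∩ b := hne₁.choose_spec
    have hx₂ : x ∈ c₂ ∩ b := by rw [show x = hne₂.choose from heq]; exact hne₂.choose_spec
    have hsing₁ : c₁ ∩ b = {x} := by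
      obtain ⟨y, hy⟩ := Finset.card_eq_one.mp h1
      rw [hy] at hx₁ ⊢
      rw [Finset.mem_singleton.mp hx₁]
    have hsing₂ : c₂ ∩ b = {x} := by
      obtain ⟨y, hy⟩ := Finset.card_eq_one.mp h2
      rw [hy] at hx₂ ⊢
      rw [Finset.mem_singleton.mp hx₂]
    have hxb : x ∈ b := (Finset.mem_inter.mp hx₁).2
    obtain ⟨w, -, huniq⟩ := M.ax2 b hb x hxb A hA
    have e₁ : c₁ = w := huniq c₁ ⟨hc₁', (Finset.mem_inter.mp hx₁).1, hAc₁,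
      by rw [Finset.inter_comm]; exact hsing₁⟩
    have e₂ : c₂ = w := huniq c₂ ⟨hc₂', (Finset.mem_inter.mp hx₂).1, hAc₂,
      by rw [Finset.inter_comm]; exact hsing₂⟩
    exact e₁.trans e₂.symm

lemma meet_upper {q : ℕ} (hq : M.HasOrder q) {b : Finset P} (hb : b ∈ M.circles)
    {A : P} (hA : A ∉ b) :
    2 * (M.circles.filter fun c => A ∈ c ∧ (c ∩ b).Nonempty).card ≤ (q + 1) * (q + 2) := by
  classical
  set meet := M.circles.filter (fun c => A ∈ c ∧ (c ∩ b).Nonempty) with hmeet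
  set V := (b ×ˢ M.circles).filter (fun x : P × Finset P => A ∈ x.2 ∧ x.1 ∈ x.2) with hV
  have hVcard : V.card = (q + 1) * (q + 1) := by
    rw [hV]
    refine (card_filter_product_left b M.circles (fun B c => A ∈ c ∧ B ∈ c)).trans ?_
    refine (Finset.sum_congr rfl (fun B hB => M.pair_count hq
      (fun h : A = _ => hA (by rw [h]; exact hB)))).trans ?_
    rw [Finset.sum_const, hq b hb, smul_eq_mul]
  have hVsum : V.card = ∑ c ∈ meet, (b ∩ c).card := by
    rw [hV]
    refine (card_filter_product_right b M.circles (fun B c => A ∈ c ∧ B ∈ c)).trans ?_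
    refine (Finset.sum_congr rfl (fun c hc =>
      (?_ : _ = if A ∈ c ∧ (c ∩ b).Nonempty then (b ∩ c).card else 0))).trans ?_
    · by_cases hcond : A ∈ c ∧ (c ∩ b).Nonempty
      · rw [if_pos hcond]
        congr 1
        ext B
        simp only [Finset.mem_filter, Finset.mem_inter]
        tauto
      · rw [if_neg hcond, Finset.card_eq_zero]
        ext B
        simp only [Finset.mem_filter, Finset.notMem_empty, iff_false]
        intro ⟨hBb, hAc, hBc⟩
        exact hcond ⟨hAc, ⟨B, Finset.mem_inter.mpr ⟨hBc, hBb⟩⟩⟩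
    · rw [← Finset.sum_filter]
  have hpoint : ∀ c ∈ meet, 2 ≤ (b ∩ c).card + (if (c ∩ b).card = 1 then 1 else 0) := by
    intro c hc
    obtain ⟨-, -, hne⟩ := Finset.mem_filter.mp hc
    have h1 : 1 ≤ (c ∩ b).card := Finset.card_pos.mpr hne
    rw [Finset.inter_comm b c]
    by_cases h : (c ∩ b).card = 1
    · rw [if_pos h]; omega
    · rw [if_neg h]; omega
  have htan : ∑ c ∈ meet, (if (c ∩ b).card = 1 then 1 else 0) ≤ q + 1 := by
    rw [← Finset.sum_filter, Finset.sum_const, smul_eq_mul, mul_one]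
    refine le_trans (Finset.card_le_card ?_) (M.tangent_le hq hb hA)
    intro c hc
    obtain ⟨hc1, hc2⟩ := Finset.mem_filter.mp hc
    obtain ⟨hc3, hc4, -⟩ := Finset.mem_filter.mp hc1
    exact Finset.mem_filter.mpr ⟨hc3, hc4, hc2⟩
  calc 2 * meet.card = ∑ _c ∈ meet, 2 := by rw [Finset.sum_const, smul_eq_mul, mul_comm]
    _ ≤ ∑ c ∈ meet, ((b ∩ c).card + (if (c ∩ b).card = 1 then 1 else 0)) :=
        Finset.sum_le_sum hpoint
    _ = (∑ c ∈ meet, (b ∩ c).card) + ∑ c ∈ meet, (if (c ∩ b).card = 1 then 1 else 0) :=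
        Finset.sum_add_distrib
    _ ≤ (q + 1) * (q + 1) + (q + 1) := by rw [← hVsum, hVcard]; exact Nat.add_le_add_left htan _
    _ = (q + 1) * (q + 2) := by ring

lemma per_point [Fintype P] {q : ℕ} (hq : M.HasOrder q) {b : Finset P} (hb : b ∈ M.circles)
    {A : P} (hA : A ∉ b) :
    2 * (q ^ 2 + q) ≤
      2 * (M.circles.filter fun c => A ∈ c ∧ c ∩ b = ∅).card + (q + 1) * (q + 2) := by
  classical
  have hsplit : (M.circles.filter fun c => A ∈ c ∧ (c ∩ b).Nonempty).card
      + (M.circles.filter fun c => A ∈ c ∧ c ∩ b = ∅).card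
      = (M.circles.filter fun c => A ∈ c).card := by
    rw [← Finset.filter_filter, ← Finset.filter_filter]
    have := Finset.card_filter_add_card_filter_not
      (s := M.circles.filter fun c => A ∈ c) (p := fun c => (c ∩ b).Nonempty)
    rw [← this]
    have heq2 : (M.circles.filter fun c => A ∈ c).filter (fun c => c ∩ b = ∅)
        = (M.circles.filter fun c => A ∈ c).filter (fun c => ¬(c ∩ b).Nonempty) :=
      Finset.filter_congr (fun c _ => by simp [Finset.not_nonempty_iff_eq_empty])
    rw [heq2]
  have hmeet := M.meet_upper hq hb hA
  have hpc := M.point_count hq A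
  omega

lemma Ga_lower [Fintype P] {q : ℕ} (hq : M.HasOrder q) {a b : Finset P}
    (ha : a ∈ M.circles) (hb : b ∈ M.circles) (hne : a ≠ b) :
    (a \ b).card * (2 * (q ^ 2 + q)) ≤
      4 * (M.circles.filter fun c => (c ∩ a).Nonempty ∧ c ∩ b = ∅ ∧ c ≠ a).card
        + (a \ b).card * ((q + 1) * (q + 2) + 2) := by
  classical
  set U := ((a \ b) ×ˢ M.circles).filter
    (fun x : P × Finset P => x.1 ∈ x.2 ∧ x.2 ∩ b = ∅ ∧ x.2 ≠ a) with hU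
  have hleft : (a \ b).card * (2 * (q ^ 2 + q)) ≤
      2 * U.card + (a \ b).card * ((q + 1) * (q + 2) + 2) := by
    have hUcard : U.card = ∑ A ∈ a \ b,
        (M.circles.filter fun c => A ∈ c ∧ c ∩ b = ∅ ∧ c ≠ a).card := by
      rw [hU]
      exact card_filter_product_left (a \ b) M.circles (fun A c => A ∈ c ∧ c ∩ b = ∅ ∧ c ≠ a)
    have hper : ∀ A ∈ a \ b, 2 * (q ^ 2 + q) ≤
        2 * (M.circles.filter fun c => A ∈ c ∧ c ∩ b = ∅ ∧ c ≠ a).card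
          + ((q + 1) * (q + 2) + 2) := by
      intro A hA
      have hAb : A ∉ b := (Finset.mem_sdiff.mp hA).2
      have hpp := M.per_point hq hb hAb
      have hsub : (M.circles.filter fun c => A ∈ c ∧ c ∩ b = ∅) ⊆
          insert a (M.circles.filter fun c => A ∈ c ∧ c ∩ b = ∅ ∧ c ≠ a) := by
        intro c hc
        obtain ⟨hc1, hc2, hc3⟩ := Finset.mem_filter.mp hc
        by_cases hca : c = a
        · rw [hca]; exact Finset.mem_insert_self a _
        · exact Finset.mem_insert_of_mem (Finset.mem_filter.mpr ⟨hc1, hc2, hc3, hca⟩)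
      have hcardle := (Finset.card_le_card hsub).trans (Finset.card_insert_le _ _)
      omega
    calc (a \ b).card * (2 * (q ^ 2 + q))
        = ∑ _A ∈ a \ b, 2 * (q ^ 2 + q) := by rw [Finset.sum_const, smul_eq_mul]
      _ ≤ ∑ A ∈ a \ b, (2 * (M.circles.filter fun c =>
            A ∈ c ∧ c ∩ b = ∅ ∧ c ≠ a).card + ((q + 1) * (q + 2) + 2)) :=
          Finset.sum_le_sum hper
      _ = 2 * U.card + (a \ b).card * ((q + 1) * (q + 2) + 2) := by
          rw [Finset.sum_add_distrib, Finset.sum_const, smul_eq_mul, ← Finset.mul_sum, ← hUcard]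
  have hright : U.card ≤
      2 * (M.circles.filter fun c => (c ∩ a).Nonempty ∧ c ∩ b = ∅ ∧ c ≠ a).card := by
    have hUcard : U.card = ∑ c ∈ M.circles,
        ((a \ b).filter fun A => A ∈ c ∧ c ∩ b = ∅ ∧ c ≠ a).card := by
      rw [hU]
      exact card_filter_product_right (a \ b) M.circles (fun A c => A ∈ c ∧ c ∩ b = ∅ ∧ c ≠ a)
    rw [hUcard]
    have hpt : ∀ c ∈ M.circles,
        ((a \ b).filter fun A => A ∈ c ∧ c ∩ b = ∅ ∧ c ≠ a).card ≤
          if (c ∩ a).Nonempty ∧ c ∩ b = ∅ ∧ c ≠ a then 2 else 0 := by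
      intro c hc
      by_cases hcond : (c ∩ a).Nonempty ∧ c ∩ b = ∅ ∧ c ≠ a
      · rw [if_pos hcond]
        have hsubset : (a \ b).filter (fun A => A ∈ c ∧ c ∩ b = ∅ ∧ c ≠ a) ⊆ a ∩ c := by
          intro A hA
          exact Finset.mem_inter.mpr ⟨(Finset.mem_sdiff.mp (Finset.mem_filter.mp hA).1).1,
            (Finset.mem_filter.mp hA).2.1⟩
        refine (Finset.card_le_card hsubset).trans ?_
        rw [Finset.inter_comm]
        exact M.inter_card_le_two hc ha hcond.2.2
      · rw [if_neg hcond]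
        refine Nat.le_zero.mpr (Finset.card_eq_zero.mpr ?_)
        ext A
        simp only [Finset.mem_filter, Finset.notMem_empty, iff_false]
        rintro ⟨hA, hAc, h2, h3⟩
        exact hcond ⟨⟨A, Finset.mem_inter.mpr ⟨hAc, (Finset.mem_sdiff.mp hA).1⟩⟩, h2, h3⟩
    refine le_trans (Finset.sum_le_sum hpt) ?_
    rw [← Finset.sum_filter, Finset.sum_const, smul_eq_mul, mul_comm]
  omega

end MobiusPlane
namespace MobiusPlane

variable {P : Type*} [DecidableEq P] (M : MobiusPlane P)

lemma adj_inl_inr {p : P} {z : {z // z ∈ M.circles}} :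
    M.incGraph.Adj (Sum.inl p) (Sum.inr z) ↔ p ∈ z.1 := by
  constructor
  · rintro (⟨p', z', h1, h2, h3⟩ | ⟨p', z', h1, h2, h3⟩)
    · rw [Sum.inl.injEq] at h1
      rw [Sum.inr.injEq] at h2
      exact h1 ▸ h2 ▸ h3
    · exact absurd h1 (by simp)
  · intro hp
    exact Or.inl ⟨p, z, rfl, rfl, hp⟩

lemma adj_inr_inl {p : P} {z : {z // z ∈ M.circles}} :
    M.incGraph.Adj (Sum.inr z) (Sum.inl p) ↔ p ∈ z.1 := by
  rw [M.incGraph.adj_comm]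
  exact M.adj_inl_inr

lemma not_adj_inr_inr {y z : {z // z ∈ M.circles}} :
    ¬ M.incGraph.Adj (Sum.inr y) (Sum.inr z) := by
  rintro (⟨p', z', h1, -, -⟩ | ⟨p', z', -, h2, -⟩)
  · exact absurd h1 (by simp)
  · exact absurd h2 (by simp)

lemma dist_inr_inr_ne_two_of_disjoint {c d : {z // z ∈ M.circles}}
    (hdisj : c.1 ∩ d.1 = ∅) :
    M.incGraph.dist (Sum.inr c) (Sum.inr d) ≠ 2 := by
  intro h2
  obtain ⟨w, hw⟩ := SimpleGraph.exists_walk_of_dist_ne_zero (ne_of_eq_of_ne h2 (by norm_num))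
  rw [h2] at hw
  cases w with
  | nil => simp at hw
  | cons h₁ w' =>
    cases w' with
    | nil => simp at hw
    | cons h₂ w'' =>
      have hlen : w''.length = 0 := by
        simp only [SimpleGraph.Walk.length_cons] at hw
        omega
      have hveq := SimpleGraph.Walk.eq_of_length_eq_zero hlen
      rcases h₁ with ⟨p', z', hh1, -, -⟩ | ⟨p', z', hh1, hh2, hh3⟩
      · exact absurd hh1 (by simp)
      · have hzc : z' = c := by
          rw [Sum.inr.injEq] at hh1
          exact hh1.symm
        rw [hveq] at h₂
        rw [hh2] at h₂
        have hpd : p' ∈ d.1 := (M.adj_inl_inr).mp h₂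
        have : p' ∈ c.1 ∩ d.1 := Finset.mem_inter.mpr ⟨hzc ▸ hh3, hpd⟩
        rw [hdisj] at this
        exact absurd this (Finset.notMem_empty p')

lemma dist_inr_inr_eq_two_of_meet {c d : {z // z ∈ M.circles}} (hne : c ≠ d)
    (hmeet : (c.1 ∩ d.1).Nonempty) :
    M.incGraph.dist (Sum.inr c) (Sum.inr d) = 2 := by
  obtain ⟨Q, hQ⟩ := hmeet
  obtain ⟨hQc, hQd⟩ := Finset.mem_inter.mp hQ
  have hadj1 : M.incGraph.Adj (Sum.inr c) (Sum.inl Q) := (M.adj_inr_inl).mpr hQc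
  have hadj2 : M.incGraph.Adj (Sum.inl Q) (Sum.inr d) := (M.adj_inl_inr).mpr hQd
  have hwalk : M.incGraph.dist (Sum.inr c) (Sum.inr d) ≤ 2 := by
    have := SimpleGraph.dist_le (SimpleGraph.Walk.cons hadj1
      (SimpleGraph.Walk.cons hadj2 SimpleGraph.Walk.nil))
    simpa using this
  have hne0 : M.incGraph.dist (Sum.inr c) (Sum.inr d) ≠ 0 :=
    SimpleGraph.dist_ne_zero_iff_ne_and_reachable.mpr
      ⟨by simp [hne], (hadj1.reachable.trans hadj2.reachable)⟩
  have hne1 : M.incGraph.dist (Sum.inr c) (Sum.inr d) ≠ 1 := by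
    rw [ne_eq, SimpleGraph.dist_eq_one_iff_adj]
    exact M.not_adj_inr_inr
  omega

lemma reachable_inr_inr {q : ℕ} (hq : M.HasOrder q) (c d : {z // z ∈ M.circles}) :
    M.incGraph.Reachable (Sum.inr c) (Sum.inr d) := by
  have hccard : 0 < c.1.card := by rw [hq c.1 c.2]; omega
  have hdcard : 0 < d.1.card := by rw [hq d.1 d.2]; omega
  obtain ⟨A, hA⟩ := Finset.card_pos.mp hccard
  obtain ⟨B, hB⟩ := Finset.card_pos.mp hdcard
  by_cases hAB : A = B
  · exact ((M.adj_inr_inl).mpr hA).reachable.trans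
      ((M.adj_inl_inr).mpr (hAB ▸ hB)).reachable
  · obtain ⟨z, hz, hAz, hBz⟩ := M.exists_circle_pair hAB
    exact ((M.adj_inr_inl).mpr hA).reachable.trans
      (((M.adj_inl_inr (z := ⟨z, hz⟩)).mpr hAz).reachable.trans
        (((M.adj_inr_inl (z := ⟨z, hz⟩)).mpr hBz).reachable.trans
          ((M.adj_inl_inr).mpr hB).reachable))

end MobiusPlane
/-- For two distinct circles `a`, `b`, the number of vertices of the incidence graph
at different distances from `a` and from `b` is at least `q³/2 - 3q² + 11q/2 - 1`. -/
theorem hyperedge_lower_bound {P : Type*} [DecidableEq P] [Fintype P]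
    (M : MobiusPlane P) (q : ℕ) (h : M.HasOrder q)
    (a b : {z // z ∈ M.circles}) (hab : a ≠ b) :
    (q : ℚ) ^ 3 / 2 - 3 * (q : ℚ) ^ 2 + 11 * (q : ℚ) / 2 - 1 ≤
      (Set.ncard {v : P ⊕ {z // z ∈ M.circles} |
        M.incGraph.dist v (Sum.inr a) ≠ M.incGraph.dist v (Sum.inr b)} : ℚ) := by
  classical
  have hq2 := M.two_le_q h
  have hvalne : a.1 ≠ b.1 := fun he => hab (Subtype.ext he)
  set Ga : Finset {z // z ∈ M.circles} :=
    Finset.univ.filter (fun c => (c.1 ∩ a.1).Nonempty ∧ c.1 ∩ b.1 = ∅ ∧ c ≠ a) with hGa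
  set Gb : Finset {z // z ∈ M.circles} :=
    Finset.univ.filter (fun c => (c.1 ∩ b.1).Nonempty ∧ c.1 ∩ a.1 = ∅ ∧ c ≠ b) with hGb
  set X : Finset P := (a.1 \ b.1) ∪ (b.1 \ a.1) with hX
  set Y : Finset {z // z ∈ M.circles} := insert a (insert b (Ga ∪ Gb)) with hY
  set F : Finset (P ⊕ {z // z ∈ M.circles}) := X.image Sum.inl ∪ Y.image Sum.inr with hF
  -- every element of F lies in the target set
  have hFS : ∀ v ∈ F, v ∈ {v : P ⊕ {z // z ∈ M.circles} |
      M.incGraph.dist v (Sum.inr a) ≠ M.incGraph.dist v (Sum.inr b)} := by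
    intro v hv
    rw [hF, Finset.mem_union] at hv
    rcases hv with hv | hv
    · obtain ⟨A, hA, rfl⟩ := Finset.mem_image.mp hv
      rw [hX, Finset.mem_union] at hA
      rcases hA with hA | hA
      · obtain ⟨hAa, hAb⟩ := Finset.mem_sdiff.mp hA
        have h1 : M.incGraph.dist (Sum.inl A) (Sum.inr a) = 1 :=
          SimpleGraph.dist_eq_one_iff_adj.mpr ((M.adj_inl_inr).mpr hAa)
        have h2 : M.incGraph.dist (Sum.inl A) (Sum.inr b) ≠ 1 := by
          rw [ne_eq, SimpleGraph.dist_eq_one_iff_adj]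
          exact fun hadj => hAb ((M.adj_inl_inr).mp hadj)
        exact fun hEq => h2 (hEq ▸ h1)
      · obtain ⟨hAb, hAa⟩ := Finset.mem_sdiff.mp hA
        have h1 : M.incGraph.dist (Sum.inl A) (Sum.inr b) = 1 :=
          SimpleGraph.dist_eq_one_iff_adj.mpr ((M.adj_inl_inr).mpr hAb)
        have h2 : M.incGraph.dist (Sum.inl A) (Sum.inr a) ≠ 1 := by
          rw [ne_eq, SimpleGraph.dist_eq_one_iff_adj]
          exact fun hadj => hAa ((M.adj_inl_inr).mp hadj)
        exact fun hEq => h2 (hEq.symm ▸ h1)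
    · obtain ⟨c, hc, rfl⟩ := Finset.mem_image.mp hv
      rw [hY, Finset.mem_insert, Finset.mem_insert] at hc
      rcases hc with rfl | rfl | hc
      · have h1 : M.incGraph.dist (Sum.inr c) (Sum.inr c) = 0 := SimpleGraph.dist_self
        have h2 : M.incGraph.dist (Sum.inr c) (Sum.inr b) ≠ 0 :=
          SimpleGraph.dist_ne_zero_iff_ne_and_reachable.mpr
            ⟨by simp [hab], M.reachable_inr_inr h c b⟩
        exact fun hEq => h2 (hEq ▸ h1)
      · have h1 : M.incGraph.dist (Sum.inr c) (Sum.inr c) = 0 := SimpleGraph.dist_self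
        have h2 : M.incGraph.dist (Sum.inr c) (Sum.inr a) ≠ 0 :=
          SimpleGraph.dist_ne_zero_iff_ne_and_reachable.mpr
            ⟨by simp [Ne.symm hab], M.reachable_inr_inr h c a⟩
        exact fun hEq => h2 (hEq.symm ▸ h1)
      · rcases Finset.mem_union.mp hc with hc | hc
        · obtain ⟨-, hmeet, hdisj, hcnea⟩ := Finset.mem_filter.mp hc
          have h1 : M.incGraph.dist (Sum.inr c) (Sum.inr a) = 2 :=
            M.dist_inr_inr_eq_two_of_meet hcnea hmeet
          have h2 : M.incGraph.dist (Sum.inr c) (Sum.inr b) ≠ 2 :=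
            M.dist_inr_inr_ne_two_of_disjoint hdisj
          exact fun hEq => h2 (hEq ▸ h1)
        · obtain ⟨-, hmeet, hdisj, hcneb⟩ := Finset.mem_filter.mp hc
          have h1 : M.incGraph.dist (Sum.inr c) (Sum.inr b) = 2 :=
            M.dist_inr_inr_eq_two_of_meet hcneb hmeet
          have h2 : M.incGraph.dist (Sum.inr c) (Sum.inr a) ≠ 2 :=
            M.dist_inr_inr_ne_two_of_disjoint hdisj
          exact fun hEq => h2 (hEq.symm ▸ h1)
  -- F.card is a lower bound for the ncard
  have hcard_le : F.card ≤ (Set.ncard {v : P ⊕ {z // z ∈ M.circles} |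
      M.incGraph.dist v (Sum.inr a) ≠ M.incGraph.dist v (Sum.inr b)}) := by
    rw [← Set.ncard_coe_finset F]
    exact Set.ncard_le_ncard (fun v hv => hFS v (Finset.mem_coe.mp hv)) (Set.toFinite _)
  -- compute F.card
  have hXY : Disjoint (X.image Sum.inl) (Y.image (Sum.inr : {z // z ∈ M.circles} → _)) := by
    rw [Finset.disjoint_left]
    intro v hv hv'
    obtain ⟨A, -, rfl⟩ := Finset.mem_image.mp hv
    obtain ⟨c, -, hcon⟩ := Finset.mem_image.mp hv'
    exact absurd hcon (by simp)
  have hXdisj : Disjoint (a.1 \ b.1) (b.1 \ a.1) := by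
    rw [Finset.disjoint_left]
    intro A hA hA'
    exact absurd (Finset.mem_sdiff.mp hA').1 (Finset.mem_sdiff.mp hA).2
  have hGaGb : Disjoint Ga Gb := by
    rw [Finset.disjoint_left]
    intro c hc hc'
    obtain ⟨-, -, hdisj, -⟩ := Finset.mem_filter.mp hc
    obtain ⟨-, hmeet, -, -⟩ := Finset.mem_filter.mp hc'
    rw [hdisj] at hmeet
    exact absurd hmeet Finset.not_nonempty_empty
  have haGaGb : a ∉ insert b (Ga ∪ Gb) := by
    rw [Finset.mem_insert]
    rintro (rfl | hmem)
    · exact hab rfl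
    · rcases Finset.mem_union.mp hmem with hm | hm
      · exact (Finset.mem_filter.mp hm).2.2.2 rfl
      · have := (Finset.mem_filter.mp hm).2.2.1
        have hcard : a.1.card = q + 1 := h a.1 a.2
        have : a.1 = ∅ := by rwa [Finset.inter_self] at this
        rw [this] at hcard
        simp at hcard
  have hbGaGb : b ∉ Ga ∪ Gb := by
    rintro hmem
    rcases Finset.mem_union.mp hmem with hm | hm
    · have := (Finset.mem_filter.mp hm).2.2.1
      have hcard : b.1.card = q + 1 := h b.1 b.2
      have : b.1 = ∅ := by rwa [Finset.inter_self] at this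
      rw [this] at hcard
      simp at hcard
    · exact (Finset.mem_filter.mp hm).2.2.2 rfl
  have hFcard : F.card = (a.1 \ b.1).card + (b.1 \ a.1).card + (2 + (Ga.card + Gb.card)) := by
    rw [hF, Finset.card_union_of_disjoint hXY, Finset.card_image_of_injective _ Sum.inl_injective,
      Finset.card_image_of_injective _ Sum.inr_injective, hX,
      Finset.card_union_of_disjoint hXdisj, hY, Finset.card_insert_of_notMem haGaGb,
      Finset.card_insert_of_notMem hbGaGb, Finset.card_union_of_disjoint hGaGb]
    omega
  -- relate Ga, Gb to the circle-level filters
  have hGaCard : Ga.card =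
      (M.circles.filter fun c => (c ∩ a.1).Nonempty ∧ c ∩ b.1 = ∅ ∧ c ≠ a.1).card := by
    apply Finset.card_bij (fun c _ => c.1)
    · intro c hc
      obtain ⟨-, h1, h2, h3⟩ := Finset.mem_filter.mp hc
      exact Finset.mem_filter.mpr ⟨c.2, h1, h2, fun he => h3 (Subtype.ext he)⟩
    · intro c₁ _ c₂ _ heq
      exact Subtype.ext heq
    · intro c hc
      obtain ⟨hc1, h1, h2, h3⟩ := Finset.mem_filter.mp hc
      exact ⟨⟨c, hc1⟩, Finset.mem_filter.mpr ⟨Finset.mem_univ _,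
        h1, h2, fun he => h3 (congrArg Subtype.val he)⟩, rfl⟩
  have hGbCard : Gb.card =
      (M.circles.filter fun c => (c ∩ b.1).Nonempty ∧ c ∩ a.1 = ∅ ∧ c ≠ b.1).card := by
    apply Finset.card_bij (fun c _ => c.1)
    · intro c hc
      obtain ⟨-, h1, h2, h3⟩ := Finset.mem_filter.mp hc
      exact Finset.mem_filter.mpr ⟨c.2, h1, h2, fun he => h3 (Subtype.ext he)⟩
    · intro c₁ _ c₂ _ heq
      exact Subtype.ext heq
    · intro c hc
      obtain ⟨hc1, h1, h2, h3⟩ := Finset.mem_filter.mp hc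
      exact ⟨⟨c, hc1⟩, Finset.mem_filter.mpr ⟨Finset.mem_univ _,
        h1, h2, fun he => h3 (congrArg Subtype.val he)⟩, rfl⟩
  -- counting bounds
  have hGaLow := M.Ga_lower h a.2 b.2 hvalne
  have hGbLow := M.Ga_lower h b.2 a.2 (Ne.symm hvalne)
  rw [← hGaCard] at hGaLow
  rw [← hGbCard] at hGbLow
  -- cardinalities of the pieces
  have hka : (a.1 \ b.1).card + (a.1 ∩ b.1).card = q + 1 := by
    rw [Finset.card_sdiff_add_card_inter, h a.1 a.2]
  have hkb : (b.1 \ a.1).card + (b.1 ∩ a.1).card = q + 1 := by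
    rw [Finset.card_sdiff_add_card_inter, h b.1 b.2]
  have hkk : (b.1 ∩ a.1).card = (a.1 ∩ b.1).card := by rw [Finset.inter_comm]
  have hk2 : (a.1 ∩ b.1).card ≤ 2 := M.inter_card_le_two a.2 b.2 hvalne
  -- final arithmetic
  have hcast : (F.card : ℚ) ≤ (Set.ncard {v : P ⊕ {z // z ∈ M.circles} |
      M.incGraph.dist v (Sum.inr a) ≠ M.incGraph.dist v (Sum.inr b)} : ℚ) := by
    exact_mod_cast hcard_le
  refine le_trans ?_ hcast
  rw [hFcard]
  set sa := (a.1 \ b.1).card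
  set sb := (b.1 \ a.1).card
  set k := (a.1 ∩ b.1).card
  set ga := Ga.card
  set gb := Gb.card
  have hsa : sa = q + 1 - k := by omega
  have hsb : sb = q + 1 - k := by omega
  have hq1 : (1 : ℚ) ≤ (q : ℚ) - 1 := by
    have : (2 : ℚ) ≤ (q : ℚ) := by exact_mod_cast hq2
    linarith
  have hsaQ : ((q : ℚ) - 1) ≤ (sa : ℚ) := by
    have : q - 1 ≤ sa := by omega
    calc ((q : ℚ) - 1) ≤ ((q - 1 : ℕ) : ℚ) := by
          rw [Nat.cast_sub (by omega)]; norm_num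
      _ ≤ (sa : ℚ) := by exact_mod_cast this
  have hsbQ : ((q : ℚ) - 1) ≤ (sb : ℚ) := by
    have : q - 1 ≤ sb := by omega
    calc ((q : ℚ) - 1) ≤ ((q - 1 : ℕ) : ℚ) := by
          rw [Nat.cast_sub (by omega)]; norm_num
      _ ≤ (sb : ℚ) := by exact_mod_cast this
  have hGaQ : (sa : ℚ) * (2 * ((q : ℚ) ^ 2 + q)) ≤
      4 * (ga : ℚ) + (sa : ℚ) * (((q : ℚ) + 1) * ((q : ℚ) + 2) + 2) := by
    exact_mod_cast hGaLow
  have hGbQ : (sb : ℚ) * (2 * ((q : ℚ) ^ 2 + q)) ≤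
      4 * (gb : ℚ) + (sb : ℚ) * (((q : ℚ) + 1) * ((q : ℚ) + 2) + 2) := by
    exact_mod_cast hGbLow
  have hQ2 : (2 : ℚ) ≤ (q : ℚ) := by exact_mod_cast hq2
  push_cast
  nlinarith [mul_nonneg (by linarith : (0:ℚ) ≤ (sa:ℚ) + (sb:ℚ) - 2*((q:ℚ) - 1))
      (by nlinarith : (0:ℚ) ≤ (q:ℚ)^2 - (q:ℚ)),
    hGaQ, hGbQ, sq_nonneg ((q : ℚ) - 2), hQ2]
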